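/- For any graph G with vertices listed in an order v_1, …, v_n, there is exactly one chain D_1 ⊆ D_2 ⊆ ⋯ ⊆ D_n in which each D_i is a subset of {v_1, …, v_i} that is an independent dominating set of G_i; that is, G has a unique incremental independent dominating set chain. -/

import Mathlib

/-- `D` is a dominating set of the prefix graph `G_i` (induced on the first `i`
vertices `v_1, …, v_i`, i.e. the vertices of `Fin n` with value `< i`);
here `D` is assumed to consist of vertices of the prefix, so that adjacency
in `G_i` coincides with adjacency in `G`. -/
def PrefixDom {n : ℕ} (G : SimpleGraph (Fin n)) (i : ℕ) (D : Finset (Fin n)) : Prop :=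
  ∀ v : Fin n, v.val < i → v ∈ D ∨ ∃ u ∈ D, G.Adj u v

/-- The natural ordering `v_1, …, v_n` of `Fin n` is always-connected:
every prefix graph `G_i` (for `1 ≤ i ≤ n`) is connected. -/
def AlwaysConnected {n : ℕ} (G : SimpleGraph (Fin n)) : Prop :=
  ∀ i : ℕ, 1 ≤ i → i ≤ n → (G.induce {v : Fin n | v.val < i}).Connected

/-- `D 1 ⊆ D 2 ⊆ ⋯ ⊆ D n` is a chain in which each `D i` is a subset of
`{v_1, …, v_i}` that is a dominating set of the prefix graph `G_i`. -/
def IncDomChain {n : ℕ} (G : SimpleGraph (Fin n)) (D : ℕ → Finset (Fin n)) : Prop :=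
  (∀ i : ℕ, 1 ≤ i → i < n → D i ⊆ D (i + 1)) ∧
  (∀ i : ℕ, 1 ≤ i → i ≤ n → (∀ v ∈ D i, v.val < i) ∧ PrefixDom G i (D i))

/-- `R` is an incremental dominating set of `G`: the final set `D n` of some
incremental dominating chain. -/
def IsIncDomSet {n : ℕ} (G : SimpleGraph (Fin n)) (R : Finset (Fin n)) : Prop :=
  ∃ D : ℕ → Finset (Fin n), IncDomChain G D ∧ R = D n

/-- An incremental connected dominating chain: additionally, each `D i`
induces a connected subgraph. -/
def IncConnDomChain {n : ℕ} (G : SimpleGraph (Fin n)) (D : ℕ → Finset (Fin n)) : Prop :=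
  IncDomChain G D ∧
    ∀ i : ℕ, 1 ≤ i → i ≤ n → (G.induce (↑(D i) : Set (Fin n))).Connected

/-- `R` is an incremental connected dominating set of `G`. -/
def IsIncConnDomSet {n : ℕ} (G : SimpleGraph (Fin n)) (R : Finset (Fin n)) : Prop :=
  ∃ D : ℕ → Finset (Fin n), IncConnDomChain G D ∧ R = D n

/-- `D 1 ⊆ ⋯ ⊆ D n` is a chain in which each `D i ⊆ {v_1, …, v_i}` is an
independent dominating set of the prefix graph `G_i`. -/
def IncIndDomChain {n : ℕ} (G : SimpleGraph (Fin n)) (D : ℕ → Finset (Fin n)) : Prop :=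
  (∀ i : ℕ, 1 ≤ i → i < n → D i ⊆ D (i + 1)) ∧
  (∀ i : ℕ, 1 ≤ i → i ≤ n → (∀ v ∈ D i, v.val < i) ∧ PrefixDom G i (D i) ∧
    ∀ u ∈ D i, ∀ v ∈ D i, ¬ G.Adj u v)

open Classical in
noncomputable def greedy {n : ℕ} (G : SimpleGraph (Fin n)) : ℕ → Finset (Fin n)
  | 0 => ∅
  | (i+1) =>
    if h : i < n then
      if ∀ u ∈ greedy G i, ¬ G.Adj u ⟨i, h⟩ then insert ⟨i, h⟩ (greedy G i)
      else greedy G i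
    else greedy G i

lemma greedy_subset {n : ℕ} (G : SimpleGraph (Fin n)) (i : ℕ) :
    greedy G i ⊆ greedy G (i+1) := by
  rw [greedy]
  split_ifs <;> first | exact Finset.subset_insert _ _ | exact Finset.Subset.refl _

lemma greedy_spec {n : ℕ} (G : SimpleGraph (Fin n)) :
    ∀ i : ℕ, i ≤ n → (∀ v ∈ greedy G i, v.val < i) ∧ PrefixDom G i (greedy G i) ∧
      ∀ u ∈ greedy G i, ∀ v ∈ greedy G i, ¬ G.Adj u v := by
  intro i
  induction i with
  | zero => simp [greedy, PrefixDom]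
  | succ i ih =>
    intro hin
    obtain ⟨h1, h2, h3⟩ := ih (by omega)
    have hi : i < n := by omega
    rw [greedy, dif_pos hi]
    by_cases hc : ∀ u ∈ greedy G i, ¬ G.Adj u ⟨i, hi⟩
    · rw [if_pos hc]
      refine ⟨?_, ?_, ?_⟩
      · intro v hv
        rcases Finset.mem_insert.mp hv with rfl | hv
        · exact Nat.lt_succ_self i
        · exact Nat.lt_succ_of_lt (h1 v hv)
      · intro v hv
        rcases Nat.lt_succ_iff_lt_or_eq.mp hv with hlt | heq
        · rcases h2 v hlt with h | ⟨u, hu, hadj⟩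
          · exact Or.inl (Finset.mem_insert_of_mem h)
          · exact Or.inr ⟨u, Finset.mem_insert_of_mem hu, hadj⟩
        · left
          have : v = ⟨i, hi⟩ := Fin.ext heq
          simp [this]
      · intro u hu v hv hadj
        rcases Finset.mem_insert.mp hu with rfl | hu <;>
          rcases Finset.mem_insert.mp hv with rfl | hv
        · exact G.irrefl hadj
        · exact hc v hv (hadj.symm)
        · exact hc u hu hadj
        · exact h3 u hu v hv hadj
    · rw [if_neg hc]
      refine ⟨fun v hv => Nat.lt_succ_of_lt (h1 v hv), ?_, h3⟩
      intro v hv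
      rcases Nat.lt_succ_iff_lt_or_eq.mp hv with hlt | heq
      · exact h2 v hlt
      · push_neg at hc
        obtain ⟨u, hu, hadj⟩ := hc
        right
        exact ⟨u, hu, by rwa [show v = ⟨i, hi⟩ from Fin.ext heq]⟩

lemma chain_eq_greedy {n : ℕ} (G : SimpleGraph (Fin n)) (D : ℕ → Finset (Fin n))
    (hD : IncIndDomChain G D) : ∀ i : ℕ, 1 ≤ i → i ≤ n → D i = greedy G i := by
  intro i
  induction i with
  | zero => omega
  | succ i ih =>
    intro _ hin
    rcases Nat.eq_zero_or_pos i with rfl | hpos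
    · -- base case : D 1 = {⟨0, _⟩}
      obtain ⟨hb, hdom, hind⟩ := hD.2 1 le_rfl hin
      have hn0 : 0 < n := hin
      have hval : ∀ v ∈ D 1, v = (⟨0, hn0⟩ : Fin n) := by
        intro v hv
        exact Fin.ext (Nat.lt_one_iff.mp (hb v hv))
      have hw : (⟨0, hn0⟩ : Fin n) ∈ D 1 := by
        rcases hdom ⟨0, hn0⟩ Nat.one_pos with h | ⟨u, hu, hadj⟩
        · exact h
        · exact absurd hadj (by rw [hval u hu]; exact G.irrefl)
      have hD1 : D 1 = {(⟨0, hn0⟩ : Fin n)} := by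
        apply Finset.Subset.antisymm
        · intro x hx; simp [hval x hx]
        · intro x hx; rw [Finset.mem_singleton.mp hx]; exact hw
      rw [hD1, greedy, dif_pos hn0, if_pos (by simp [greedy])]
      simp [greedy]
    · have hDi : D i = greedy G i := ih hpos (by omega)
      have hsub : D i ⊆ D (i+1) := hD.1 i hpos (by omega)
      obtain ⟨hb', hdom', hind'⟩ := hD.2 (i+1) (by omega) hin
      obtain ⟨hb, hdom, hind⟩ := hD.2 i hpos (by omega)
      have hmem : ∀ x ∈ D (i+1), x.val < i → x ∈ D i := by
        intro x hx hxi
        rcases hdom x hxi with h | ⟨t, ht, hadj⟩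
        · exact h
        · exact absurd hadj (hind' t (hsub ht) x hx)
      have hi : i < n := by omega
      rw [greedy, dif_pos hi]
      by_cases hc : ∀ u ∈ D i, ¬ G.Adj u ⟨i, hi⟩
      · have hc' : ∀ u ∈ greedy G i, ¬ G.Adj u ⟨i, hi⟩ := hDi ▸ hc
        rw [if_pos hc', ← hDi]
        have hw : (⟨i, hi⟩ : Fin n) ∈ D (i+1) := by
          rcases hdom' ⟨i, hi⟩ (Nat.lt_succ_self i) with h | ⟨u, hu, hadj⟩
          · exact h
          · exfalso
            have hul : u.val < i + 1 := hb' u hu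
            rcases Nat.lt_succ_iff_lt_or_eq.mp hul with hlt | heq
            · exact hc u (hmem u hu hlt) hadj
            · exact G.irrefl (by rwa [show u = ⟨i, hi⟩ from Fin.ext heq] at hadj)
        apply Finset.Subset.antisymm
        · intro x hx
          rcases Nat.lt_succ_iff_lt_or_eq.mp (hb' x hx) with hlt | heq
          · exact Finset.mem_insert_of_mem (hmem x hx hlt)
          · rw [show x = ⟨i, hi⟩ from Fin.ext heq]
            exact Finset.mem_insert_self _ _
        · intro x hx
          rcases Finset.mem_insert.mp hx with rfl | hx
          · exact hw
          · exact hsub hx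
      · push_neg at hc
        obtain ⟨u, hu, hadj⟩ := hc
        have hc' : ¬ ∀ u ∈ greedy G i, ¬ G.Adj u ⟨i, hi⟩ := by
          rw [← hDi]; push_neg; exact ⟨u, hu, hadj⟩
        rw [if_neg hc', ← hDi]
        apply Finset.Subset.antisymm
        · intro x hx
          rcases Nat.lt_succ_iff_lt_or_eq.mp (hb' x hx) with hlt | heq
          · exact hmem x hx hlt
          · exfalso
            rw [show x = ⟨i, hi⟩ from Fin.ext heq] at hx
            exact hind' u (hsub hu) _ hx hadj
        · exact hsub

/-- For any graph `G` with vertices listed in an order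
`v_1, …, v_n`, there is exactly one chain `D_1 ⊆ ⋯ ⊆ D_n` in which each `D_i` is a
subset of `{v_1, …, v_i}` that is an independent dominating set of `G_i`. -/
theorem unique_inc_independent_dominating_chain {n : ℕ} (G : SimpleGraph (Fin n)) :
    (∃ D : ℕ → Finset (Fin n), IncIndDomChain G D) ∧
    ∀ D D' : ℕ → Finset (Fin n), IncIndDomChain G D → IncIndDomChain G D' →
      ∀ i : ℕ, 1 ≤ i → i ≤ n → D i = D' i := by
  constructor
  · refine ⟨greedy G, fun i _ _ => greedy_subset G i, fun i _ hi => ?_⟩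
    obtain ⟨h1, h2, h3⟩ := greedy_spec G i hi
    exact ⟨h1, h2, h3⟩
  · intro D D' hD hD' i h1 hn
    rw [chain_eq_greedy G D hD i h1 hn, chain_eq_greedy G D' hD' i h1 hn]
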